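/- Let X be a nested almost convex set with convex layers R_1, …, R_k. Then either |R_j| = 2^j for all 1 ≤ j ≤ k, or |R_1| = 1 and |R_j| = 3·2^(j−2) for all 2 ≤ j ≤ k. -/

import Mathlib

open Set

noncomputable section

/-- Points of the plane. -/
abbrev Pt : Type := ℝ × ℝ

/-- The orientation determinant of the triple `(a, b, c)`:
`c` lies strictly to the left of the directed line from `a` to `b` iff `orient a b c > 0`. -/
def orient (a b c : Pt) : ℝ :=
  (b.1 - a.1) * (c.2 - a.2) - (b.2 - a.2) * (c.1 - a.1)

/-- A set of points is in general position if no three pairwise distinct points are collinear. -/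
def GenPos (X : Set Pt) : Prop :=
  ∀ a ∈ X, ∀ b ∈ X, ∀ c ∈ X, a ≠ b → a ≠ c → b ≠ c → orient a b c ≠ 0

/-- The set of extreme points of the convex hull of `S`. -/
def extremePts (S : Set Pt) : Set Pt := Set.extremePoints ℝ (convexHull ℝ S)

/-- Remove the extreme points of the convex hull (one peeling step of convex layers). -/
def peel (S : Set Pt) : Set Pt := S \ extremePts S

/-- `X` has exactly `k` convex layers. -/
def HasLayers (X : Set Pt) (k : ℕ) : Prop :=
  peel^[k] X = ∅ ∧ ∀ j < k, peel^[j] X ≠ ∅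

/-- `X_j`, the union of the `j` innermost convex layers (when `X` has `k` layers). -/
def layerSub (X : Set Pt) (k j : ℕ) : Set Pt := peel^[k - j] X

/-- `R_j`, the `j`-th convex layer of `X` (when `X` has `k` layers), `R_1` innermost. -/
def layer (X : Set Pt) (k j : ℕ) : Set Pt := extremePts (layerSub X k j)

/-- `X` is a nested almost convex set. -/
def IsNACS (X : Set Pt) : Prop :=
  X.Finite ∧ X.Nonempty ∧ GenPos X ∧
  ∀ k, HasLayers X k →
    ∀ j, 1 ≤ j → j ≤ k →
      ∀ a ∈ layer X k j, ∀ b ∈ layer X k j, ∀ c ∈ layer X k j,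
        a ≠ b → a ≠ c → b ≠ c →
        ∃! p : Pt, p ∈ layerSub X k (j - 1) ∩ interior (convexHull ℝ ({a, b, c} : Set Pt))

/-- `q` is a counterclockwise enumeration of `S`. -/
def CCWEnum {m : ℕ} (S : Set Pt) (q : Fin m → Pt) : Prop :=
  Function.Injective q ∧ Set.range q = S ∧
  ∀ a b c : Fin m, a < b → b < c → 0 < orient (q a) (q b) (q c)

/-- The ordered pair `(q1, q2)` of points of `R` is adoptable from `p`. -/
def AdoptablePair (R : Set Pt) (p q1 q2 : Pt) : Prop :=
  ∀ q3 ∈ R \ ({q1, q2} : Set Pt), p ∈ interior (convexHull ℝ ({q1, q2, q3} : Set Pt))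

/-- The `i`-th binary string of length `j` in lexicographic order (`false` before `true`). -/
def strOfNat (j i : ℕ) : List Bool :=
  (List.range j).map fun t => i.testBit (j - 1 - t)

/-- The numeric (lexicographic) rank of a binary string among strings of its length. -/
def natOfStr (s : List Bool) : ℕ := s.foldl (fun n b => 2 * n + b.toNat) 0

/-- The leftmost `k`-level descendant of the node `s`. -/
def firstStr (k : ℕ) (s : List Bool) : List Bool := s ++ List.replicate (k - s.length) false

/-- The rightmost `k`-level descendant of the node `s`. -/
def lastStr (k : ℕ) (s : List Bool) : List Bool := s ++ List.replicate (k - s.length) true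

/-- Non-root nodes of the tree `T₁(k)`: binary strings of length `1..k`. -/
def ValidNode1 (k : ℕ) (s : List Bool) : Prop := 1 ≤ s.length ∧ s.length ≤ k

/-- A type-1 labeling of `X`, given by its label function `x` (the inverse of `ψ`). -/
def IsLabeling1 (k : ℕ) (X : Set Pt) (x : List Bool → Pt) : Prop :=
  Set.InjOn x {s | ValidNode1 k s} ∧ x '' {s | ValidNode1 k s} = X

/-- A type-1 labeling is nested. -/
def Nested1 (k : ℕ) (X : Set Pt) (x : List Bool → Pt) : Prop :=
  ∀ j, 1 ≤ j → j ≤ k →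
    CCWEnum (layer X k j) fun i : Fin (2 ^ j) => x (strOfNat j i.val)

/-- A type-1 labeling is adoptable. -/
def Adoptable1 (k : ℕ) (X : Set Pt) (x : List Bool → Pt) : Prop :=
  ∀ s : List Bool, 1 ≤ s.length → s.length + 1 ≤ k →
    AdoptablePair (layer X k (s.length + 1)) (x s) (x (s ++ [false])) (x (s ++ [true]))

/-- `previous[R_k(u)]` for a type-1 labeling: the cyclic predecessor (in the left-to-right,
i.e. counterclockwise, order of the `k`-level) of `first[R_k(u)]`. -/
def prev1 (k : ℕ) (x : List Bool → Pt) (s : List Bool) : Pt :=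
  x (strOfNat k ((natOfStr (firstStr k s) + (2 ^ k - 1)) % 2 ^ k))

/-- `next[R_k(u)]` for a type-1 labeling: the cyclic successor of `last[R_k(u)]`. -/
def next1 (k : ℕ) (x : List Bool → Pt) (s : List Bool) : Pt :=
  x (strOfNat k ((natOfStr (lastStr k s) + 1) % 2 ^ k))

/-- A type-1 labeling is well laid. -/
def WellLaid1 (k : ℕ) (x : List Bool → Pt) : Prop :=
  ∀ s : List Bool, 1 ≤ s.length → s.length ≤ k →
    x s ∈ convexHull ℝ ({prev1 k x s, x (firstStr k s), x (lastStr k s)} : Set Pt) ∧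
    x s ∈ convexHull ℝ ({x (firstStr k s), x (lastStr k s), next1 k x s} : Set Pt)

/-- `X_u` for a type-1 labeling: the labels of the proper descendants of `s`. -/
def descSet1 (k : ℕ) (x : List Bool → Pt) (s : List Bool) : Set Pt :=
  x '' {t | ValidNode1 k t ∧ s <+: t ∧ s ≠ t}

/-- `X̄_u = X_u ∪ {x_u}` for a type-1 labeling. -/
def barSet1 (k : ℕ) (x : List Bool → Pt) (s : List Bool) : Set Pt :=
  insert (x s) (descSet1 k x s)

/-- A type-1 labeling is an internal separation. -/
def InternalSep1 (k : ℕ) (X : Set Pt) (x : List Bool → Pt) : Prop :=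
  ∀ s : List Bool, s.length + 1 ≤ k →
    ∀ y ∈ X \ descSet1 k x s,
      ∀ a ∈ barSet1 k x (s ++ [false]), ∀ b ∈ barSet1 k x (s ++ [true]),
        0 < orient a b y

/-- A type-1 labeling is an external separation. -/
def ExternalSep1 (k : ℕ) (X : Set Pt) (x : List Bool → Pt) : Prop :=
  ∀ s : List Bool, 1 ≤ s.length → s.length + 1 ≤ k →
    ∀ y ∈ X \ barSet1 k x s,
      (∀ a ∈ barSet1 k x (s ++ [false]), 0 < orient a (x s) y) ∧
      (∀ b ∈ barSet1 k x (s ++ [true]), 0 < orient (x s) b y)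

/-- Nodes of the tree `T₂(k)`: the root `none`, and pairs `(c, s)`. -/
abbrev Node2 : Type := Option (Fin 3 × List Bool)

/-- Valid nodes of `T₂(k)`: the root, and pairs `(c, s)` with `|s| ≤ k - 2`. -/
def ValidNode2 (k : ℕ) : Node2 → Prop
  | none => True
  | some (_, s) => s.length + 2 ≤ k

/-- A type-2 labeling of `X`, given by its label function `x` (the inverse of `ψ`). -/
def IsLabeling2 (k : ℕ) (X : Set Pt) (x : Node2 → Pt) : Prop :=
  Set.InjOn x {u | ValidNode2 k u} ∧ x '' {u | ValidNode2 k u} = X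

/-- The `i`-th node (left-to-right) of the `(j+2)`-level of `T₂(k)`. -/
def node2At (j i : ℕ) : Node2 :=
  some (⟨i / 2 ^ j % 3, by omega⟩, strOfNat j (i % 2 ^ j))

/-- A type-2 labeling is nested. -/
def Nested2 (k : ℕ) (X : Set Pt) (x : Node2 → Pt) : Prop :=
  CCWEnum (layer X k 1) (fun _ : Fin 1 => x none) ∧
  ∀ j : ℕ, j + 2 ≤ k →
    CCWEnum (layer X k (j + 2)) fun i : Fin (3 * 2 ^ j) => x (node2At j i.val)

/-- A type-2 labeling is adoptable. -/
def Adoptable2 (k : ℕ) (X : Set Pt) (x : Node2 → Pt) : Prop :=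
  ∀ (c : Fin 3) (s : List Bool), s.length + 3 ≤ k →
    AdoptablePair (layer X k (s.length + 3)) (x (some (c, s)))
      (x (some (c, s ++ [false]))) (x (some (c, s ++ [true])))

/-- `previous[R_k(u)]` for a type-2 labeling, `u = (c, s)`. -/
def prev2 (k : ℕ) (x : Node2 → Pt) (c : Fin 3) (s : List Bool) : Pt :=
  x (node2At (k - 2)
      ((c.val * 2 ^ (k - 2) + natOfStr (firstStr (k - 2) s) + (3 * 2 ^ (k - 2) - 1)) %
        (3 * 2 ^ (k - 2))))

/-- `next[R_k(u)]` for a type-2 labeling, `u = (c, s)`. -/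
def next2 (k : ℕ) (x : Node2 → Pt) (c : Fin 3) (s : List Bool) : Pt :=
  x (node2At (k - 2)
      ((c.val * 2 ^ (k - 2) + natOfStr (lastStr (k - 2) s) + 1) % (3 * 2 ^ (k - 2))))

/-- A type-2 labeling is well laid (the root is the only node with `R_k(u) = R_k`). -/
def WellLaid2 (k : ℕ) (x : Node2 → Pt) : Prop :=
  ∀ (c : Fin 3) (s : List Bool), s.length + 2 ≤ k →
    x (some (c, s)) ∈ convexHull ℝ
      ({prev2 k x c s, x (some (c, firstStr (k - 2) s)),
        x (some (c, lastStr (k - 2) s))} : Set Pt) ∧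
    x (some (c, s)) ∈ convexHull ℝ
      ({x (some (c, firstStr (k - 2) s)), x (some (c, lastStr (k - 2) s)),
        next2 k x c s} : Set Pt)

/-- `X_u` for a type-2 labeling and a non-root node `u = (c, s)`. -/
def descSet2 (k : ℕ) (x : Node2 → Pt) (c : Fin 3) (s : List Bool) : Set Pt :=
  x '' {u | ∃ t : List Bool, u = some (c, t) ∧ t.length + 2 ≤ k ∧ s <+: t ∧ s ≠ t}

/-- `X̄_u = X_u ∪ {x_u}` for a type-2 labeling and a non-root node `u = (c, s)`. -/
def barSet2 (k : ℕ) (x : Node2 → Pt) (c : Fin 3) (s : List Bool) : Set Pt :=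
  insert (x (some (c, s))) (descSet2 k x c s)

/-- A type-2 labeling is an internal separation. -/
def InternalSep2 (k : ℕ) (X : Set Pt) (x : Node2 → Pt) : Prop :=
  (∀ (c : Fin 3) (s : List Bool), s.length + 3 ≤ k →
    ∀ y ∈ X \ descSet2 k x c s,
      ∀ a ∈ barSet2 k x c (s ++ [false]), ∀ b ∈ barSet2 k x c (s ++ [true]),
        0 < orient a b y) ∧
  (∀ i : Fin 3,
    ∀ y ∈ X \ (barSet2 k x i [] ∪ barSet2 k x (i + 1) []),
      ∀ a ∈ barSet2 k x i [], ∀ b ∈ barSet2 k x (i + 1) [],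
        0 < orient a b y)

/-- A type-2 labeling is an external separation. -/
def ExternalSep2 (k : ℕ) (X : Set Pt) (x : Node2 → Pt) : Prop :=
  ∀ (c : Fin 3) (s : List Bool), s.length + 3 ≤ k →
    ∀ y ∈ X \ barSet2 k x c s,
      (∀ a ∈ barSet2 k x c (s ++ [false]), 0 < orient a (x (some (c, s))) y) ∧
      (∀ b ∈ barSet2 k x c (s ++ [true]), 0 < orient (x (some (c, s))) b y)

/-- One corner-refinement step: from `α_s = (q, o, p)` to `α_{s0}` (for `b = false`)
or `α_{s1}` (for `b = true`). -/
def cornerStep (α : Pt × Pt × Pt) (b : Bool) : Pt × Pt × Pt :=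
  let q := α.1
  let o := α.2.1
  let p := α.2.2
  if b then (o + (1 / 5 : ℝ) • (q - o), o + (1 / 5 : ℝ) • (p - o), o + (2 / 5 : ℝ) • (p - o))
  else (o + (2 / 5 : ℝ) • (q - o), o + (1 / 5 : ℝ) • (q - o), o + (1 / 5 : ℝ) • (p - o))

/-- The corner `α_s = (q_s, o_s, p_s)` assigned to the binary string `s` (with parameter `k`). -/
def corner (k : ℕ) (s : List Bool) : Pt × Pt × Pt :=
  s.foldl cornerStep
    (((0 : ℝ), (2 * 5 ^ (k + 1) : ℝ)), ((0 : ℝ), (0 : ℝ)), ((2 * 5 ^ (k + 1) : ℝ), (0 : ℝ)))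

/-- The point `y_v` for a binary string `v = s ++ [b]` of positive length. -/
def ypt (k : ℕ) (v : List Bool) : Pt :=
  let α := corner k v.dropLast
  if v.getLastD false then α.2.1 + (1 / 5 : ℝ) • (α.2.2 - α.2.1)
  else α.2.1 + (1 / 5 : ℝ) • (α.1 - α.2.1)

/-- The point `x_s`: the midpoint of `y_{s·0^(k+1−|s|)}` and `y_{s·1^(k+1−|s|)}`. -/
def xpt (k : ℕ) (s : List Bool) : Pt :=
  (1 / 2 : ℝ) •
    (ypt k (s ++ List.replicate (k + 1 - s.length) false) +
      ypt k (s ++ List.replicate (k + 1 - s.length) true))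

lemma orient_cycle (a b c : Pt) : orient b c a = orient a b c := by simp only [orient]; ring
lemma orient_swap (a b c : Pt) : orient b a c = -orient a b c := by simp only [orient]; ring
lemma orient_swap23 (a b c : Pt) : orient a c b = -orient a b c := by simp only [orient]; ring

lemma orient_self12 (a c : Pt) : orient a a c = 0 := by simp [orient]
lemma orient_self13 (a b : Pt) : orient a b a = 0 := by simp only [orient]; ring
lemma orient_self23 (a b : Pt) : orient a b b = 0 := by simp only [orient]; ring

/-- affine in the last argument -/
lemma orient_combo2 (p q x y : Pt) (α β : ℝ) (h : α + β = 1) :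
    orient p q (α • x + β • y) = α * orient p q x + β * orient p q y := by
  have hβ : β = 1 - α := by linarith
  subst hβ
  simp only [orient, Prod.fst_add, Prod.snd_add, Prod.smul_fst, Prod.smul_snd, smul_eq_mul]
  ring

lemma orient_combo3 (p q a b c : Pt) (α β γ : ℝ) (h : α + β + γ = 1) :
    orient p q (α • a + β • b + γ • c) =
      α * orient p q a + β * orient p q b + γ * orient p q c := by
  have hγ : γ = 1 - α - β := by linarith
  subst hγ
  simp only [orient, Prod.fst_add, Prod.snd_add, Prod.smul_fst, Prod.smul_snd, smul_eq_mul]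
  ring

/-- The convex-combination description of a triangle. -/
lemma mem_triangle_iff {a b c : Pt} {z : Pt} :
    z ∈ convexHull ℝ ({a, b, c} : Set Pt) ↔
      ∃ α β γ : ℝ, 0 ≤ α ∧ 0 ≤ β ∧ 0 ≤ γ ∧ α + β + γ = 1 ∧ α • a + β • b + γ • c = z := by
  constructor
  · intro hz
    rw [show ({a, b, c} : Set Pt) = insert a {b, c} from rfl,
      convexHull_insert ⟨b, by simp⟩, mem_convexJoin] at hz
    obtain ⟨x, hx, y, hy, hz⟩ := hz
    rw [mem_singleton_iff] at hx
    subst hx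
    rw [convexHull_pair] at hy
    obtain ⟨u, v, hu, hv, huv, hy⟩ := hy
    obtain ⟨s, t, hs, ht, hst, hz⟩ := hz
    exact ⟨s, t * u, t * v, hs, by positivity, by positivity, by nlinarith, by
      rw [← hz, ← hy]; module⟩
  · rintro ⟨α, β, γ, hα, hβ, hγ, hsum, rfl⟩
    by_cases hβγ : β + γ = 0
    · have hβ0 : β = 0 := by linarith
      have hγ0 : γ = 0 := by linarith
      have : α = 1 := by linarith
      subst this; subst hβ0; subst hγ0
      simpa using subset_convexHull ℝ ({a,b,c} : Set Pt) (by simp)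
    · have hβγ' : 0 < β + γ := lt_of_le_of_ne (by linarith) (Ne.symm hβγ)
      have hbc : (β / (β + γ)) • b + (γ / (β + γ)) • c ∈ convexHull ℝ ({a, b, c} : Set Pt) := by
        apply convex_convexHull ℝ _ (subset_convexHull ℝ _ (by simp : b ∈ _))
          (subset_convexHull ℝ _ (by simp : c ∈ _)) (by positivity) (by positivity)
        field_simp
      have := convex_convexHull ℝ ({a,b,c} : Set Pt)
        (subset_convexHull ℝ _ (by simp : a ∈ _)) hbc hα (le_of_lt hβγ') (by linarith)
      have h1 : (β + γ) * (β / (β + γ)) = β := by field_simp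
      have h2 : (β + γ) * (γ / (β + γ)) = γ := by field_simp
      have key : α • a + β • b + γ • c
          = α • a + (β + γ) • ((β / (β + γ)) • b + (γ / (β + γ)) • c) := by
        rw [smul_add, smul_smul, smul_smul, h1, h2, add_assoc]
      rw [key]; exact this


lemma orient_sum_id (a b c z : Pt) :
    orient z b c + orient a z c + orient a b z = orient a b c := by
  simp only [orient]; ring

lemma orient_cramer (a b c z : Pt) :
    orient z b c • a + orient a z c • b + orient a b z • c = orient a b c • z := by
  apply Prod.ext <;>
    simp only [Prod.fst_add, Prod.snd_add, Prod.smul_fst, Prod.smul_snd, smul_eq_mul, orient] <;>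
    ring

lemma orient_of_combo {a b c z : Pt} {α β γ : ℝ} (hsum : α + β + γ = 1)
    (hz : α • a + β • b + γ • c = z) :
    orient z b c = α * orient a b c ∧ orient a z c = β * orient a b c ∧
      orient a b z = γ * orient a b c := by
  have hγ : γ = 1 - α - β := by linarith
  subst hγ; subst hz
  refine ⟨?_, ?_, ?_⟩ <;>
    simp only [orient, Prod.fst_add, Prod.snd_add, Prod.smul_fst, Prod.smul_snd, smul_eq_mul] <;>
    ring

lemma mem_triangle_iff_orient {a b c z : Pt} (hD : orient a b c ≠ 0) :
    z ∈ convexHull ℝ ({a, b, c} : Set Pt) ↔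
      0 ≤ orient z b c * orient a b c ∧ 0 ≤ orient a z c * orient a b c ∧
        0 ≤ orient a b z * orient a b c := by
  set D := orient a b c with hDdef
  constructor
  · intro hz
    obtain ⟨α, β, γ, hα, hβ, hγ, hsum, hcombo⟩ := mem_triangle_iff.1 hz
    obtain ⟨h1, h2, h3⟩ := orient_of_combo hsum hcombo
    rw [h1, h2, h3]
    refine ⟨by nlinarith [sq_nonneg D], by nlinarith [sq_nonneg D], by nlinarith [sq_nonneg D]⟩
  · rintro ⟨h1, h2, h3⟩
    refine mem_triangle_iff.2 ⟨orient z b c / D, orient a z c / D, orient a b z / D,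
      ?_, ?_, ?_, ?_, ?_⟩
    · rw [div_nonneg_iff]
      rcases lt_trichotomy D 0 with h | h | h
      · right; constructor <;> nlinarith
      · exact absurd h hD
      · left; constructor <;> nlinarith
    · rw [div_nonneg_iff]
      rcases lt_trichotomy D 0 with h | h | h
      · right; constructor <;> nlinarith
      · exact absurd h hD
      · left; constructor <;> nlinarith
    · rw [div_nonneg_iff]
      rcases lt_trichotomy D 0 with h | h | h
      · right; constructor <;> nlinarith
      · exact absurd h hD
      · left; constructor <;> nlinarith
    · field_simp
      exact orient_sum_id a b c z
    · have : (orient z b c / D) • a + (orient a z c / D) • b + (orient a b z / D) • c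
          = D⁻¹ • (orient z b c • a + orient a z c • b + orient a b z • c) := by
        simp only [smul_add, smul_smul, div_eq_inv_mul]
      rw [this, orient_cramer, smul_smul, inv_mul_cancel₀ hD, one_smul]

lemma line_not_mem_interior {a b c z : Pt} (hD : orient a b c ≠ 0)
    (hz : orient b c z = 0) :
    z ∉ interior (convexHull ℝ ({a, b, c} : Set Pt)) := by
  intro hint
  -- the triangle is inside the halfplane H
  set o := orient b c a with ho
  have hoD : o = orient a b c := orient_cycle a b c
  have hone : o ≠ 0 := by rw [hoD]; exact hD
  set H : Set Pt := {w | 0 ≤ orient b c w * o} with hH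
  have hconvH : Convex ℝ H := by
    intro x hx y hy s t hs ht hst
    have := orient_combo2 b c x y s t hst
    simp only [hH, mem_setOf_eq] at hx hy ⊢
    rw [this]
    nlinarith
  have hsub : convexHull ℝ ({a, b, c} : Set Pt) ⊆ H := by
    apply convexHull_min _ hconvH
    rintro w (rfl | rfl | rfl) <;> simp only [hH, mem_setOf_eq]
    · nlinarith [sq_nonneg o]
    · simp only [orient]; ring_nf; positivity
    · simp only [orient]; ring_nf; positivity
  have hzH : z ∈ interior H := interior_mono hsub hint
  obtain ⟨ε, hε, hball⟩ := Metric.isOpen_iff.1 isOpen_interior z hzH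
  set n : Pt := ((b.2 - c.2) * o, (c.1 - b.1) * o) with hn
  have hbc : (c.1 - b.1)^2 + (c.2 - b.2)^2 ≠ 0 := by
    intro h
    apply hD
    have h1 : c.1 - b.1 = 0 := by nlinarith [sq_nonneg (c.1-b.1), sq_nonneg (c.2-b.2)]
    have h2 : c.2 - b.2 = 0 := by nlinarith [sq_nonneg (c.1-b.1), sq_nonneg (c.2-b.2)]
    simp only [orient]
    linear_combination (b.1 - a.1) * h2 - (b.2 - a.2) * h1
  set δ : ℝ := ε / (2 * (‖n‖ + 1)) with hδ
  have hδpos : 0 < δ := by positivity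
  have hwball : z - δ • n ∈ Metric.ball z ε := by
    rw [Metric.mem_ball, dist_eq_norm]
    have : z - δ • n - z = -(δ • n) := by abel
    rw [this, norm_neg, norm_smul, Real.norm_eq_abs, abs_of_pos hδpos]
    have key : δ * (‖n‖ + 1) = ε / 2 := by
      rw [hδ]; field_simp
    nlinarith [norm_nonneg n]
  have hwH : z - δ • n ∈ H := interior_subset (hball hwball)
  simp only [hH, mem_setOf_eq] at hwH
  have hcalc : orient b c (z - δ • n) * o
      = orient b c z * o - δ * o^2 * ((c.1 - b.1)^2 + (c.2 - b.2)^2) := by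
    simp only [orient, hn, Prod.fst_sub, Prod.snd_sub, Prod.smul_fst, Prod.smul_snd, smul_eq_mul]
    ring
  rw [hcalc, hz] at hwH
  have : 0 < δ * o^2 * ((c.1 - b.1)^2 + (c.2 - b.2)^2) := by
    have h2 : 0 < (c.1 - b.1)^2 + (c.2 - b.2)^2 :=
      lt_of_le_of_ne (by positivity) (Ne.symm hbc)
    have h3 : 0 < o^2 := by positivity
    positivity
  linarith

lemma mem_interior_triangle_iff {a b c z : Pt} (hD : orient a b c ≠ 0) :
    z ∈ interior (convexHull ℝ ({a, b, c} : Set Pt)) ↔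
      0 < orient z b c * orient a b c ∧ 0 < orient a z c * orient a b c ∧
        0 < orient a b z * orient a b c := by
  constructor
  · intro hz
    obtain ⟨h1, h2, h3⟩ := (mem_triangle_iff_orient hD).1 (interior_subset hz)
    have key : ∀ p q r : Pt, orient p q r ≠ 0 → ({p, q, r} : Set Pt) = {a, b, c} →
        True := fun _ _ _ _ _ => trivial
    refine ⟨?_, ?_, ?_⟩
    · rcases h1.lt_or_eq with h | h
      · exact h
      · exfalso
        have h0 : orient z b c = 0 := by
          rcases mul_eq_zero.1 h.symm with h' | h'
          · exact h'
          · exact absurd h' hD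
        have : orient b c z = 0 := by
          have := orient_sum_id a b c z
          rw [orient_cycle z b c]; exact h0
        exact line_not_mem_interior hD this hz
    · rcases h2.lt_or_eq with h | h
      · exact h
      · exfalso
        have h0 : orient a z c = 0 := by
          rcases mul_eq_zero.1 h.symm with h' | h'
          · exact h'
          · exact absurd h' hD
        -- z on line c a : orient c a z = orient a z c? check cyclic: orient c a z = orient z c a = orient a z c
        have hline : orient c a z = 0 := by
          rw [orient_cycle z c a, orient_cycle a z c]; exact h0
        -- apply line_not_mem_interior with triangle (b, c, a)
        have hD' : orient b c a ≠ 0 := by rw [orient_cycle]; exact hD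
        have hset : ({b, c, a} : Set Pt) = {a, b, c} := by
          ext w; simp [or_comm, or_left_comm]
        have hz' : z ∈ interior (convexHull ℝ ({b, c, a} : Set Pt)) := by rw [hset]; exact hz
        exact line_not_mem_interior hD' hline hz'
    · rcases h3.lt_or_eq with h | h
      · exact h
      · exfalso
        have h0 : orient a b z = 0 := by
          rcases mul_eq_zero.1 h.symm with h' | h'
          · exact h'
          · exact absurd h' hD
        have hD' : orient c a b ≠ 0 := by rw [orient_cycle b c a, orient_cycle a b c]; exact hD
        have hset : ({c, a, b} : Set Pt) = {a, b, c} := by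
          ext w; simp [or_comm, or_left_comm]
        have hz' : z ∈ interior (convexHull ℝ ({c, a, b} : Set Pt)) := by rw [hset]; exact hz
        exact line_not_mem_interior hD' h0 hz'
  · rintro ⟨h1, h2, h3⟩
    set W : Set Pt := {w | 0 < orient w b c * orient a b c ∧ 0 < orient a w c * orient a b c ∧
      0 < orient a b w * orient a b c} with hW
    have hopen : IsOpen W := by
      have c1 : Continuous fun w : Pt => orient w b c * orient a b c := by
        simp only [orient]; fun_prop
      have c2 : Continuous fun w : Pt => orient a w c * orient a b c := by
        simp only [orient]; fun_prop
      have c3 : Continuous fun w : Pt => orient a b w * orient a b c := by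
        simp only [orient]; fun_prop
      exact (isOpen_lt continuous_const c1).inter
        ((isOpen_lt continuous_const c2).inter (isOpen_lt continuous_const c3))
    have hsub : W ⊆ convexHull ℝ ({a, b, c} : Set Pt) := by
      intro w hw
      exact (mem_triangle_iff_orient hD).2 ⟨le_of_lt hw.1, le_of_lt hw.2.1, le_of_lt hw.2.2⟩
    exact interior_maximal hsub hopen ⟨h1, h2, h3⟩


/-- If a point of `F` is not an extreme point of the hull, it is in the hull of the rest. -/
lemma mem_hull_diff_of_not_extreme {F : Set Pt} {x : Pt} (hxF : x ∈ F)
    (hx : x ∉ Set.extremePoints ℝ (convexHull ℝ F)) : x ∈ convexHull ℝ (F \ {x}) := by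
  by_cases hFx : (F \ {x}).Nonempty
  swap
  · exfalso
    apply hx
    have hF : F = {x} := by
      apply Subset.antisymm
      · intro y hy
        by_contra hne
        exact hFx ⟨y, hy, hne⟩
      · simpa using hxF
    rw [hF, convexHull_singleton]
    simp [mem_extremePoints]
  by_contra hK
  apply hx
  have hins : insert x (F \ {x}) = F := by
    rw [Set.insert_diff_singleton, Set.insert_eq_self.2 hxF]
  rw [mem_extremePoints]
  refine ⟨subset_convexHull ℝ F hxF, ?_⟩
  intro x₁ hx₁ x₂ hx₂ hseg
  rw [← hins, convexHull_insert hFx, mem_convexJoin] at hx₁ hx₂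
  obtain ⟨x', hx', p, hp, hx₁⟩ := hx₁
  obtain ⟨x'', hx'', q, hq, hx₂⟩ := hx₂
  rw [mem_singleton_iff] at hx' hx''
  rw [hx'] at hx₁; rw [hx''] at hx₂
  obtain ⟨α₁, β₁, hα₁, hβ₁, hs₁, hx₁⟩ := hx₁
  obtain ⟨α₂, β₂, hα₂, hβ₂, hs₂, hx₂⟩ := hx₂
  obtain ⟨t, s, ht, hs, hts, hxeq⟩ := hseg
  set c : ℝ := t * α₁ + s * α₂ with hc
  have hc1 : c ≤ 1 := by nlinarith
  have hc0 : 0 ≤ c := by positivity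
  have hrest : t * β₁ + s * β₂ = 1 - c := by rw [hc]; nlinarith
  rcases eq_or_lt_of_le hc1 with hc1' | hc1'
  · -- c = 1 : both endpoints are x
    have hβ₁0 : β₁ = 0 := by nlinarith
    have hβ₂0 : β₂ = 0 := by nlinarith
    have hα₁1 : α₁ = 1 := by linarith
    have hα₂1 : α₂ = 1 := by linarith
    constructor
    · rw [← hx₁, hβ₁0, hα₁1]; simp
    · rw [← hx₂, hβ₂0, hα₂1]; simp
  · exfalso
    apply hK
    have h1c : (0:ℝ) < 1 - c := by linarith
    have hne : (1:ℝ) - c ≠ 0 := by linarith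
    set w : Pt := (t * β₁ / (1 - c)) • p + (s * β₂ / (1 - c)) • q with hw
    have hwK : w ∈ convexHull ℝ (F \ {x}) := by
      apply convex_convexHull ℝ _ hp hq
      · exact div_nonneg (by positivity) (le_of_lt h1c)
      · exact div_nonneg (by positivity) (le_of_lt h1c)
      · rw [← add_div, hrest, div_self hne]
    have hxw : x = c • x + (1 - c) • w := by
      have h1 : (1 - c) • w = (t * β₁) • p + (s * β₂) • q := by
        rw [hw, smul_add, smul_smul, smul_smul]
        congr 2 <;> field_simp
      have e1 : x = t • (α₁ • x + β₁ • p) + s • (α₂ • x + β₂ • q) := by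
        rw [hx₁, hx₂, hxeq]
      calc x = t • (α₁ • x + β₁ • p) + s • (α₂ • x + β₂ • q) := e1
      _ = (t * α₁ + s * α₂) • x + ((t * β₁) • p + (s * β₂) • q) := by module
      _ = c • x + ((t * β₁) • p + (s * β₂) • q) := by rw [hc]
      _ = c • x + (1 - c) • w := by rw [h1]
    have : (1 - c) • x = (1 - c) • w := by
      have := hxw
      nth_rewrite 1 [show x = c • x + (1 - c) • x by module] at this
      have h2 := add_left_cancel this
      exact h2
    have hx_eq_w : x = w := smul_right_injective Pt (by linarith : (1:ℝ) - c ≠ 0) this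
    have hfinal := hwK
    rw [← hx_eq_w] at hfinal
    exact hfinal

lemma extremePoints_subset_of_subset {A B : Set Pt} {x : Pt} (hBA : B ⊆ A)
    (hx : x ∈ Set.extremePoints ℝ A) (hxB : x ∈ B) : x ∈ Set.extremePoints ℝ B := by
  rw [mem_extremePoints] at hx ⊢
  exact ⟨hxB, fun x₁ h₁ x₂ h₂ hseg => hx.2 x₁ (hBA h₁) x₂ (hBA h₂) hseg⟩

lemma not_interior_of_extreme {C : Set Pt} {x : Pt} (hx : x ∈ Set.extremePoints ℝ C) :
    x ∉ interior C := by
  intro hint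
  obtain ⟨ε, hε, hball⟩ := Metric.isOpen_iff.1 isOpen_interior x hint
  set e : Pt := (1, 0) with he
  have h1 : x + (ε/2) • e ∈ C := by
    apply interior_subset
    apply hball
    rw [Metric.mem_ball, dist_eq_norm]
    have : x + (ε/2) • e - x = (ε/2) • e := by abel
    rw [this, norm_smul, Real.norm_eq_abs, abs_of_pos (by linarith)]
    have : ‖e‖ = 1 := by rw [he]; rw [Prod.norm_def]; simp
    rw [this]; linarith
  have h2 : x - (ε/2) • e ∈ C := by
    apply interior_subset
    apply hball
    rw [Metric.mem_ball, dist_eq_norm]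
    have : x - (ε/2) • e - x = -((ε/2) • e) := by abel
    rw [this, norm_neg, norm_smul, Real.norm_eq_abs, abs_of_pos (by linarith)]
    have : ‖e‖ = 1 := by rw [he]; rw [Prod.norm_def]; simp
    rw [this]; linarith
  have hseg : x ∈ openSegment ℝ (x - (ε/2) • e) (x + (ε/2) • e) := by
    refine ⟨1/2, 1/2, by norm_num, by norm_num, by norm_num, ?_⟩
    module
  have := hx.2 h2 h1 hseg
  have hcontr : (x - (ε/2) • e).1 = x.1 := by rw [this]
  simp only [Prod.fst_sub, Prod.smul_fst, he, smul_eq_mul, mul_one] at hcontr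
  linarith

/-- hull of the extreme points of the hull of a finite set is the original hull. -/
lemma convexHull_extremePoints_of_finite {F : Set Pt} (hF : F.Finite) (hne : F.Nonempty) :
    convexHull ℝ (Set.extremePoints ℝ (convexHull ℝ F)) = convexHull ℝ F := by
  have hcomp : IsCompact (convexHull ℝ F) := hF.isCompact_convexHull ℝ
  have hKM := closure_convexHull_extremePoints hcomp (convex_convexHull ℝ F)
  have hfin : (Set.extremePoints ℝ (convexHull ℝ F)).Finite :=
    hF.subset (extremePoints_convexHull_subset)
  exact ((hfin.isClosed_convexHull ℝ).closure_eq).symm.trans hKM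

/-- A non-extreme point of a finite set in general position is in the interior of the hull. -/
lemma mem_interior_of_not_extreme {F : Set Pt} (hF : F.Finite) (hgp : GenPos F) {y : Pt}
    (hyF : y ∈ F) (hy : y ∉ Set.extremePoints ℝ (convexHull ℝ F)) :
    y ∈ interior (convexHull ℝ F) := by
  have hmem := mem_hull_diff_of_not_extreme hyF hy
  rw [convexHull_eq_union] at hmem
  simp only [mem_iUnion, exists_prop] at hmem
  obtain ⟨t, hts, hai, hyt⟩ := hmem
  have hcard : t.card ≤ 3 := by
    have h1 := hai.card_le_finrank_succ
    calc t.card = Fintype.card t := (Fintype.card_coe t).symm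
    _ ≤ _ + 1 := h1
    _ ≤ Module.finrank ℝ Pt + 1 := Nat.add_le_add_right (Submodule.finrank_le _) 1
    _ = 3 := by simp
  interval_cases h : t.card
  · simp only [Finset.card_eq_zero] at h
    subst h
    simp at hyt
  · obtain ⟨a, ha⟩ := Finset.card_eq_one.1 h
    subst ha
    simp only [Finset.coe_singleton, convexHull_singleton, mem_singleton_iff] at hyt
    subst hyt
    have : y ∈ F \ {y} := hts (by simp)
    simp at this
  · obtain ⟨a, b, hab, hab'⟩ := Finset.card_eq_two.1 h
    subst hab'
    have ha : a ∈ F \ {y} := hts (by simp)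
    have hb : b ∈ F \ {y} := hts (by simp)
    have : (↑({a, b} : Finset Pt) : Set Pt) = {a, b} := by simp
    rw [this, convexHull_pair] at hyt
    obtain ⟨α, β, hα, hβ, hs, hy'⟩ := hyt
    have horient : orient a b y = 0 := by
      rw [← hy', orient_combo2 a b a b α β hs]
      rw [orient_self13, orient_self23]; ring
    have hay : a ≠ y := by simpa using ha.2
    have hby : b ≠ y := by simpa using hb.2
    exact absurd horient (hgp a ha.1 b hb.1 y hyF hab hay hby)
  · obtain ⟨a, b, c, hab, hac, hbc, habc⟩ := Finset.card_eq_three.1 h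
    subst habc
    have ha : a ∈ F \ {y} := hts (by simp)
    have hb : b ∈ F \ {y} := hts (by simp)
    have hc : c ∈ F \ {y} := hts (by simp)
    have hay : a ≠ y := by simpa using ha.2
    have hby : b ≠ y := by simpa using hb.2
    have hcy : c ≠ y := by simpa using hc.2
    have hya : y ≠ a := hay.symm
    have hyb : y ≠ b := hby.symm
    have hyc : y ≠ c := hcy.symm
    have hcoe : (↑({a, b, c} : Finset Pt) : Set Pt) = {a, b, c} := by simp
    rw [hcoe] at hyt
    have hD : orient a b c ≠ 0 := hgp a ha.1 b hb.1 c hc.1 hab hac hbc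
    obtain ⟨h1, h2, h3⟩ := (mem_triangle_iff_orient hD).1 hyt
    have hsub : convexHull ℝ ({a,b,c} : Set Pt) ⊆ convexHull ℝ F := by
      apply convexHull_mono
      intro w hw
      rcases hw with rfl | rfl | rfl
      exacts [ha.1, hb.1, hc.1]
    apply interior_mono hsub
    apply (mem_interior_triangle_iff hD).2
    refine ⟨?_, ?_, ?_⟩
    · rcases h1.lt_or_eq with h' | h'
      · exact h'
      · exfalso
        have h0 : orient y b c = 0 := by
          rcases mul_eq_zero.1 h'.symm with h'' | h''
          exacts [h'', absurd h'' hD]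
        exact (hgp y hyF b hb.1 c hc.1 hyb hyc hbc) h0
    · rcases h2.lt_or_eq with h' | h'
      · exact h'
      · exfalso
        have h0 : orient a y c = 0 := by
          rcases mul_eq_zero.1 h'.symm with h'' | h''
          exacts [h'', absurd h'' hD]
        exact (hgp a ha.1 y hyF c hc.1 hya.symm hac hyc) h0
    · rcases h3.lt_or_eq with h' | h'
      · exact h'
      · exfalso
        have h0 : orient a b y = 0 := by
          rcases mul_eq_zero.1 h'.symm with h'' | h''
          exacts [h'', absurd h'' hD]
        exact (hgp a ha.1 b hb.1 y hyF hab hya.symm hyb.symm) h0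


/-- an injective linear functional on a finite set -/
lemma exists_inj_functional {R : Set Pt} (hR : R.Finite) :
    ∃ c : ℝ, Set.InjOn (fun p : Pt => p.1 + c * p.2) R := by
  set B : Set ℝ := {c | ∃ p ∈ R, ∃ q ∈ R, p ≠ q ∧ p.1 + c * p.2 = q.1 + c * q.2} with hB
  have hBsub : B ⊆ (fun z : Pt × Pt => (z.1.1 - z.2.1) / (z.2.2 - z.1.2)) '' (R ×ˢ R) := by
    rintro c ⟨p, hp, q, hq, hpq, heq⟩
    refine ⟨(p, q), by simp [hp, hq], ?_⟩
    have h2 : p.2 ≠ q.2 := by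
      intro h2
      apply hpq
      have heq' := heq
      rw [h2] at heq'
      have h1 : p.1 = q.1 := by linarith
      exact Prod.ext h1 h2
    have : q.2 - p.2 ≠ 0 := fun h => h2 (by linarith)
    field_simp
    linarith
  have hBfin : B.Finite := (((hR.prod hR).image _)).subset hBsub
  obtain ⟨c, hc⟩ := hBfin.infinite_compl.nonempty
  refine ⟨c, fun p hp q hq heq => ?_⟩
  by_contra hne
  exact hc ⟨p, hp, q, hq, hne, heq⟩

/-- maximum for a finite set with a "total transitive on the set" relation -/
lemma exists_rel_max {α : Type*} (r : α → α → Prop) {s : Set α} (hfin : s.Finite) :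
    (∀ a ∈ s, ∀ b ∈ s, ∀ c ∈ s, r a b → r b c → r a c) →
    (∀ a ∈ s, ∀ b ∈ s, a ≠ b → r a b ∨ r b a) →
    s.Nonempty → ∃ m ∈ s, ∀ p ∈ s, p ≠ m → r p m := by
  classical
  obtain ⟨t, rfl⟩ := hfin.exists_finset_coe
  clear hfin
  induction t using Finset.cons_induction_on with
  | empty => intro _ _ h; simp at h
  | cons _ _ ha ih =>
    rename_i a u
    have hcoe : (↑(Finset.cons a u ha) : Set α) = insert a ↑u := by simp
    rw [hcoe]
    intro htrans htot _
    rcases (↑u : Set α).eq_empty_or_nonempty with hemp | hsne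
    · refine ⟨a, by simp, fun p hp hpa => ?_⟩
      rw [hemp] at hp
      simp only [insert_empty_eq, mem_singleton_iff] at hp
      exact absurd hp hpa
    · obtain ⟨m, hm, hmax⟩ := ih
        (fun x hx y hy z hz => htrans x (by simp [hx]) y (by simp [hy]) z (by simp [hz]))
        (fun x hx y hy => htot x (by simp [hx]) y (by simp [hy])) hsne
      have ham : a ≠ m := fun h => ha (by rw [h]; exact_mod_cast hm)
      rcases htot a (by simp) m (by simp [hm]) ham with h | h
      · refine ⟨m, by simp [hm], fun p hp hpm => ?_⟩
        rcases hp with rfl | hp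
        · exact h
        · exact hmax p hp hpm
      · refine ⟨a, by simp, fun p hp hpa => ?_⟩
        rcases hp with rfl | hp
        · exact absurd rfl hpa
        · by_cases hpm : p = m
          · exact hpm ▸ h
          · exact htrans p (by simp [hp]) m (by simp [hm]) a (by simp)
              (hmax p hp hpm) h

/-- transitivity of the angular order around `v` within an open halfplane -/
lemma orient_trans {v p q r : Pt} {c : ℝ}
    (hp : p.1 + c * p.2 < v.1 + c * v.2) (hq : q.1 + c * q.2 < v.1 + c * v.2)
    (hr : r.1 + c * r.2 < v.1 + c * v.2)
    (h1 : 0 < orient v p q) (h2 : 0 < orient v q r) : 0 < orient v p r := by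
  simp only [orient] at *
  nlinarith [mul_pos h1 (sub_pos.2 hr), mul_pos h2 (sub_pos.2 hp), sub_pos.2 hq]

/-- a point on the line `uw` within the cone from `v` is on the segment -/
lemma mem_seg_of_on_line {v u w y : Pt} (hd : 0 < orient v u w)
    (h0 : orient u w y = 0) (h1 : 0 ≤ orient v u y) (h2 : orient v w y ≤ 0) :
    y ∈ convexHull ℝ ({u, w} : Set Pt) := by
  have hne : u ≠ w := by
    rintro rfl
    rw [orient_self23] at hd
    exact lt_irrefl 0 hd
  -- parametrize the line
  have hline : ∃ t : ℝ, y = (1 - t) • u + t • w := by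
    by_cases h : w.1 - u.1 ≠ 0
    · refine ⟨(y.1 - u.1) / (w.1 - u.1), ?_⟩
      have hy2 : (w.1 - u.1) * (y.2 - u.2) = (w.2 - u.2) * (y.1 - u.1) := by
        simp only [orient] at h0; linarith
      apply Prod.ext
      · simp only [Prod.fst_add, Prod.smul_fst, smul_eq_mul]
        field_simp
        ring
      · simp only [Prod.snd_add, Prod.smul_snd, smul_eq_mul]
        field_simp
        nlinarith [hy2]
    · push_neg at h
      have h2ne : w.2 - u.2 ≠ 0 := by
        intro h2'
        apply hne
        exact Prod.ext (by linarith) (by linarith)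
      refine ⟨(y.2 - u.2) / (w.2 - u.2), ?_⟩
      have hy1 : (w.1 - u.1) * (y.2 - u.2) = (w.2 - u.2) * (y.1 - u.1) := by
        simp only [orient] at h0; linarith
      apply Prod.ext
      · simp only [Prod.fst_add, Prod.smul_fst, smul_eq_mul]
        field_simp
        nlinarith [hy1]
      · simp only [Prod.snd_add, Prod.smul_snd, smul_eq_mul]
        field_simp
        ring
  obtain ⟨t, hy⟩ := hline
  have e1 : orient v u y = t * orient v u w := by
    rw [hy, orient_combo2 v u u w (1-t) t (by ring), orient_self23]
    ring
  have e2 : orient v w y = (1 - t) * orient v w u := by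
    rw [hy, orient_combo2 v w u w (1-t) t (by ring), orient_self23]
    ring
  have hvwu : orient v w u = -orient v u w := by simp only [orient]; ring
  have ht0 : 0 ≤ t := by nlinarith
  have ht1 : t ≤ 1 := by nlinarith
  rw [convexHull_pair]
  exact ⟨1 - t, t, by linarith, ht0, by ring, hy.symm⟩

section claims
variable {v u w : Pt} {R' : Set Pt}

/-- Claim A : a point of the polygon on the `v`-side of line `uw` is in the triangle `vuw`. -/
lemma claimA (hd : 0 < orient v u w)
    (hvu : ∀ x ∈ convexHull ℝ R', 0 ≤ orient v u x)
    (hvw : ∀ x ∈ convexHull ℝ R', orient v w x ≤ 0)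
    (hgle : ∀ x ∈ convexHull ℝ R', orient u w x ≤ 0)
    {z x : Pt} (hx : x ∈ convexHull ℝ R') (hz : z ∈ segment ℝ v x)
    (hgz : 0 ≤ orient u w z) : z ∈ convexHull ℝ ({v, u, w} : Set Pt) := by
  obtain ⟨s, t, hs, ht, hst, rfl⟩ := hz
  have hgv : orient u w v = orient v u w := orient_cycle v u w
  set d := orient v u w with hdd
  set e := orient u w x with hee
  have he : e ≤ 0 := hgle x hx
  have hgzval : orient u w (s • v + t • x) = s * d + t * e := by
    rw [orient_combo2 u w v x s t hst, hgv]
  rcases eq_or_lt_of_le he with he0 | he0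
  · -- e = 0 : x is on the segment [u,w]
    have hxseg : x ∈ convexHull ℝ ({u, w} : Set Pt) :=
      mem_seg_of_on_line hd he0 (hvu x hx) (hvw x hx)
    have hv : v ∈ convexHull ℝ ({v,u,w} : Set Pt) := subset_convexHull _ _ (by simp)
    have hx' : x ∈ convexHull ℝ ({v,u,w} : Set Pt) :=
      convexHull_mono (by intro z hz; simp at hz; rcases hz with rfl|rfl <;> simp) hxseg
    exact (convex_convexHull ℝ _).segment_subset hv hx' ⟨s, t, hs, ht, hst, rfl⟩
  · -- e < 0
    have hde : 0 < d - e := by linarith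
    set y : Pt := (-e / (d - e)) • v + (d / (d - e)) • x with hy
    have hysum : -e / (d - e) + d / (d - e) = 1 := by field_simp; ring
    have hy0 : orient u w y = 0 := by
      rw [hy, orient_combo2 u w v x _ _ hysum, hgv]
      field_simp
      ring
    have hy1 : 0 ≤ orient v u y := by
      rw [hy, orient_combo2 v u v x _ _ hysum, orient_self13]
      have := hvu x hx
      have hpos : 0 ≤ d / (d - e) := by positivity
      nlinarith
    have hy2 : orient v w y ≤ 0 := by
      rw [hy, orient_combo2 v w v x _ _ hysum, orient_self13]
      have := hvw x hx
      have hpos : 0 ≤ d / (d - e) := by positivity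
      nlinarith
    have hyseg : y ∈ convexHull ℝ ({u, w} : Set Pt) := mem_seg_of_on_line hd hy0 hy1 hy2
    -- z on segment [v, y]
    have hgz' : 0 ≤ s * d + t * e := by rw [← hgzval]; exact hgz
    have hs' : s = 1 - t := by linarith
    rw [hs'] at hgz'
    obtain ⟨μ, hμ⟩ : ∃ μ : ℝ, μ = 1 - t * (d - e) / d := ⟨_, rfl⟩
    have hμ1 : μ ≤ 1 := by
      have h' : 0 ≤ t * (d - e) / d := by positivity
      rw [hμ]; linarith
    have hμ0 : 0 ≤ μ := by
      rw [hμ, sub_nonneg, div_le_one hd]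
      nlinarith [hgz']
    have hzeq : s • v + t • x = μ • v + (1 - μ) • y := by
      rw [hy, hμ]
      have hd0 : d ≠ 0 := ne_of_gt hd
      have hde0 : d - e ≠ 0 := ne_of_gt hde
      rw [hs']
      match_scalars <;> field_simp <;> ring
    rw [hzeq]
    have hv : v ∈ convexHull ℝ ({v,u,w} : Set Pt) := subset_convexHull _ _ (by simp)
    have hy' : y ∈ convexHull ℝ ({v,u,w} : Set Pt) :=
      convexHull_mono (by intro z hz; simp at hz; rcases hz with rfl|rfl <;> simp) hyseg
    exact (convex_convexHull ℝ _).segment_subset hv hy' ⟨μ, 1 - μ, hμ0, by linarith, by ring, rfl⟩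

/-- Claim B : a point of the polygon on the far side of line `uw` is in the hull of `R'`. -/
lemma claimB (hd : 0 < orient v u w)
    (hvu : ∀ x ∈ convexHull ℝ R', 0 ≤ orient v u x)
    (hvw : ∀ x ∈ convexHull ℝ R', orient v w x ≤ 0)
    (hgle : ∀ x ∈ convexHull ℝ R', orient u w x ≤ 0)
    (hu : u ∈ R') (hw : w ∈ R')
    {z x : Pt} (hx : x ∈ convexHull ℝ R') (hz : z ∈ segment ℝ v x)
    (hgz : orient u w z ≤ 0) : z ∈ convexHull ℝ R' := by
  obtain ⟨s, t, hs, ht, hst, rfl⟩ := hz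
  have hgv : orient u w v = orient v u w := orient_cycle v u w
  set d := orient v u w with hdd
  set e := orient u w x with hee
  have he : e ≤ 0 := hgle x hx
  have hgzval : orient u w (s • v + t • x) = s * d + t * e := by
    rw [orient_combo2 u w v x s t hst, hgv]
  have hgz' : s * d + t * e ≤ 0 := by rw [← hgzval]; exact hgz
  rcases eq_or_lt_of_le he with he0 | he0
  · -- e = 0 forces s = 0
    have hsd : s * d ≤ 0 := by nlinarith
    have hs0 : s = 0 := le_antisymm (by nlinarith) hs
    have ht1 : t = 1 := by linarith
    have : s • v + t • x = x := by rw [hs0, ht1]; module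
    rw [this]; exact hx
  · have hde : 0 < d - e := by linarith
    set y : Pt := (-e / (d - e)) • v + (d / (d - e)) • x with hy
    have hysum : -e / (d - e) + d / (d - e) = 1 := by field_simp; ring
    have hy0 : orient u w y = 0 := by
      rw [hy, orient_combo2 u w v x _ _ hysum, hgv]
      field_simp
      ring
    have hy1 : 0 ≤ orient v u y := by
      rw [hy, orient_combo2 v u v x _ _ hysum, orient_self13]
      have := hvu x hx
      have hpos : 0 ≤ d / (d - e) := by positivity
      nlinarith
    have hy2 : orient v w y ≤ 0 := by
      rw [hy, orient_combo2 v w v x _ _ hysum, orient_self13]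
      have := hvw x hx
      have hpos : 0 ≤ d / (d - e) := by positivity
      nlinarith
    have hyseg : y ∈ convexHull ℝ ({u, w} : Set Pt) := mem_seg_of_on_line hd hy0 hy1 hy2
    have hyR : y ∈ convexHull ℝ R' := by
      apply convexHull_mono (show ({u,w} : Set Pt) ⊆ R' by
        intro z hz; rcases hz with rfl | rfl; exacts [hu, by simpa using hw]) hyseg
    -- z on segment [y, x]
    have hs' : s = 1 - t := by linarith
    have ht' : t = 1 - s := by linarith
    rw [ht'] at hgz'
    obtain ⟨ν, hν⟩ : ∃ ν : ℝ, ν = -s * (d - e) / e := ⟨_, rfl⟩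
    have hν0 : 0 ≤ ν := by
      rw [hν, div_nonneg_iff]
      right
      exact ⟨by nlinarith, le_of_lt he0⟩
    have hν1 : ν ≤ 1 := by
      rw [hν, div_le_one_iff]
      right; right
      exact ⟨he0, by nlinarith [hgz']⟩
    have hzeq : s • v + t • x = ν • y + (1 - ν) • x := by
      rw [hy, hν]
      have hd0 : d ≠ 0 := ne_of_gt hd
      have hde0 : (d - e) ≠ 0 := ne_of_gt hde
      have he0' : e ≠ 0 := ne_of_lt he0
      rw [hs']
      match_scalars <;> field_simp <;> ring
    rw [hzeq]
    exact (convex_convexHull ℝ _).segment_subset hyR hx ⟨ν, 1 - ν, hν0, by linarith, by ring, rfl⟩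
end claims


lemma genpos_mono {X Y : Set Pt} (h : GenPos X) (hXY : Y ⊆ X) : GenPos Y :=
  fun a ha b hb c hc => h a (hXY ha) b (hXY hb) c (hXY hc)

lemma convex_orient_ge (p q : Pt) : Convex ℝ {x : Pt | 0 ≤ orient p q x} := by
  intro x hx y hy s t hs ht hst
  simp only [mem_setOf_eq] at hx hy ⊢
  rw [orient_combo2 p q x y s t hst]
  nlinarith

lemma convex_orient_le (p q : Pt) : Convex ℝ {x : Pt | orient p q x ≤ 0} := by
  intro x hx y hy s t hs ht hst
  simp only [mem_setOf_eq] at hx hy ⊢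
  rw [orient_combo2 p q x y s t hst]
  nlinarith

lemma orient_continuous (p q : Pt) : Continuous fun x : Pt => orient p q x := by
  simp only [orient]; fun_prop

/-- The main counting lemma : a convex polygon whose vertex triangles each contain
exactly one point of `S` satisfies `|S| + 2 = |R|`. -/
lemma tri_count : ∀ n : ℕ, ∀ R S : Set Pt, R.Finite → S.Finite →
    GenPos (R ∪ S) →
    (∀ r ∈ R, r ∈ Set.extremePoints ℝ (convexHull ℝ R)) →
    3 ≤ R.ncard → R.ncard = n →
    S ⊆ interior (convexHull ℝ R) →
    (∀ a ∈ R, ∀ b ∈ R, ∀ c ∈ R, a ≠ b → a ≠ c → b ≠ c →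
      ∃! p : Pt, p ∈ S ∩ interior (convexHull ℝ ({a, b, c} : Set Pt))) →
    S.ncard + 2 = R.ncard := by
  intro n
  induction n using Nat.strong_induction_on with
  | _ n ih =>
  intro R S hRf hSf hgp hconv hcard hn hSsub hone
  have hdisj : ∀ p ∈ S, p ∉ R := fun p hp hpR =>
    not_interior_of_extreme (hconv p hpR) (hSsub hp)
  rcases eq_or_lt_of_le hcard with h3 | h4
  · -- base case |R| = 3
    obtain ⟨a, b, c, hab, hac, hbc, rfl⟩ := Set.ncard_eq_three.1 h3.symm
    obtain ⟨q, hq, huniq⟩ := hone a (by simp) b (by simp) c (by simp) hab hac hbc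
    have hSq : S = {q} := by
      apply Subset.antisymm
      · intro p hp
        exact huniq p ⟨hp, hSsub hp⟩
      · intro p hp
        rw [mem_singleton_iff] at hp
        subst hp
        exact hq.1
    rw [hSq, Set.ncard_singleton, ← h3]
  · -- inductive step |R| ≥ 4
    have hRne : R.Nonempty := (Set.ncard_pos hRf).1 (by omega)
    obtain ⟨cf, hinj⟩ := exists_inj_functional hRf
    obtain ⟨v, hvR, hvmax⟩ := Set.exists_max_image R (fun p : Pt => p.1 + cf * p.2) hRf hRne
    have hvstrict : ∀ p ∈ R, p ≠ v → p.1 + cf * p.2 < v.1 + cf * v.2 := fun p hp hpv =>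
      lt_of_le_of_ne (hvmax p hp) fun h => hpv (hinj hp hvR h)
    set R' : Set Pt := R \ {v} with hR'
    have hR'f : R'.Finite := hRf.diff
    have hR'sub : R' ⊆ R := diff_subset
    have hR'card : R'.ncard + 1 = R.ncard := Set.ncard_diff_singleton_add_one hvR hRf
    have hR'3 : 3 ≤ R'.ncard := by omega
    have hR'ne : R'.Nonempty := (Set.ncard_pos hR'f).1 (by omega)
    have hne_v : ∀ p ∈ R', p ≠ v := fun p hp => by simpa using hp.2
    have hRRS : R ⊆ R ∪ S := subset_union_left
    have hSRS : S ⊆ R ∪ S := subset_union_right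
    -- the angular order around v
    have htrans : ∀ a ∈ R', ∀ b ∈ R', ∀ c ∈ R',
        0 < orient v a b → 0 < orient v b c → 0 < orient v a c := by
      intro a ha b hb c hc h1 h2
      exact orient_trans (hvstrict a ha.1 (hne_v a ha)) (hvstrict b hb.1 (hne_v b hb))
        (hvstrict c hc.1 (hne_v c hc)) h1 h2
    have htot : ∀ a ∈ R', ∀ b ∈ R', a ≠ b → 0 < orient v a b ∨ 0 < orient v b a := by
      intro a ha b hb hab
      have hne : orient v a b ≠ 0 :=
        hgp v (hRRS hvR) a (hRRS ha.1) b (hRRS hb.1) (Ne.symm (hne_v a ha))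
          (Ne.symm (hne_v b hb)) hab
      rcases hne.lt_or_gt with h | h
      · right
        rw [orient_swap23]
        linarith
      · left; exact h
    obtain ⟨u, huR', humin⟩ := exists_rel_max (fun p q => 0 < orient v q p) hR'f
      (fun a ha b hb c hc h1 h2 => htrans c hc b hb a ha h2 h1)
      (fun a ha b hb hab => (htot a ha b hb hab).symm) hR'ne
    obtain ⟨w, hwR', hwmax⟩ := exists_rel_max (fun p q => 0 < orient v p q) hR'f
      htrans htot hR'ne
    -- humin : ∀ p ∈ R', p ≠ u → 0 < orient v u p
    -- hwmax : ∀ p ∈ R', p ≠ w → 0 < orient v p w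
    have huw : u ≠ w := by
      intro h
      subst h
      obtain ⟨p, hp, hpu⟩ : ∃ p ∈ R', p ≠ u := by
        by_contra hcon
        push_neg at hcon
        have : R' ⊆ {u} := fun p hp => hcon p hp
        have := Set.ncard_le_ncard this (finite_singleton u)
        simp [Set.ncard_singleton] at this
        omega
      have h1 := humin p hp hpu
      have h2 := hwmax p hp hpu
      rw [orient_swap23] at h2
      linarith
    have hd : 0 < orient v u w := humin w hwR' huw.symm
    have hvuR : ∀ p ∈ R', 0 ≤ orient v u p := by
      intro p hp
      by_cases hpu : p = u
      · subst hpu; rw [orient_self23]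
      · exact le_of_lt (humin p hp hpu)
    have hvwR : ∀ p ∈ R', orient v w p ≤ 0 := by
      intro p hp
      by_cases hpw : p = w
      · subst hpw; rw [orient_self23]
      · have := hwmax p hp hpw
        rw [orient_swap23]
        linarith
    have hvu : ∀ x ∈ convexHull ℝ R', 0 ≤ orient v u x :=
      fun x hx => convexHull_min hvuR (convex_orient_ge v u) hx
    have hvw : ∀ x ∈ convexHull ℝ R', orient v w x ≤ 0 :=
      fun x hx => convexHull_min hvwR (convex_orient_le v w) hx
    have hins : insert v R' = R := by
      rw [hR', Set.insert_diff_singleton, Set.insert_eq_self.2 hvR]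
    have hDuwv : orient u w v = orient v u w := orient_cycle v u w
    have hDne : orient u w v ≠ 0 := by rw [hDuwv]; exact ne_of_gt hd
    -- all other points of R' are strictly on the far side of uw
    have hgR' : ∀ p ∈ R', orient u w p ≤ 0 := by
      intro p hp
      by_cases hpu : p = u
      · subst hpu; rw [orient_self13]
      by_cases hpw : p = w
      · subst hpw; rw [orient_self23]
      by_contra hcon
      push_neg at hcon
      have o1 : orient p w v = orient v p w := orient_cycle v p w
      have o2 : orient u p v = orient v u p := orient_cycle v u p
      have hmem : p ∈ convexHull ℝ ({u, w, v} : Set Pt) := by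
        apply (mem_triangle_iff_orient hDne).2
        refine ⟨?_, ?_, ?_⟩
        · rw [o1, hDuwv]
          exact le_of_lt (mul_pos (hwmax p hp hpw) hd)
        · rw [o2, hDuwv]
          exact le_of_lt (mul_pos (humin p hp hpu) hd)
        · rw [hDuwv]
          exact le_of_lt (mul_pos hcon hd)
      have hsub3 : ({u, w, v} : Set Pt) ⊆ R := by
        intro z hz
        rcases hz with rfl | rfl | rfl
        exacts [hR'sub huR', hR'sub hwR', hvR]
      have hpext := extremePoints_subset_of_subset
        (convexHull_mono hsub3) (hconv p (hR'sub hp)) hmem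
      have hpin : p ∈ ({u, w, v} : Set Pt) := extremePoints_convexHull_subset hpext
      rcases hpin with h | h | h
      exacts [hpu h, hpw h, hne_v p hp h]
    have hg : ∀ x ∈ convexHull ℝ R', orient u w x ≤ 0 :=
      fun x hx => convexHull_min hgR' (convex_orient_le u w) hx
    -- the unique point q in the triangle at v
    have hvu' : v ≠ u := fun h => hne_v u huR' h.symm
    have hvw' : v ≠ w := fun h => hne_v w hwR' h.symm
    obtain ⟨q, ⟨hqS, hqint⟩, hquniq⟩ :=
      hone v hvR u (hR'sub huR') w (hR'sub hwR') hvu' hvw' huw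
    have hset : ({u, w, v} : Set Pt) = {v, u, w} := by
      ext z; simp only [mem_insert_iff, mem_singleton_iff]; tauto
    have hqint' : q ∈ interior (convexHull ℝ ({u, w, v} : Set Pt)) := by
      rw [hset]; exact hqint
    have hgq : 0 < orient u w q := by
      have h3' := ((mem_interior_triangle_iff hDne).1 hqint').2.2
      nlinarith [hd, hDuwv]
    set S' : Set Pt := S \ {q} with hS'
    have hS'f : S'.Finite := hSf.diff
    have hS'sub : S' ⊆ S := diff_subset
    -- new uniqueness hypothesis
    have hone' : ∀ a ∈ R', ∀ b ∈ R', ∀ c ∈ R', a ≠ b → a ≠ c → b ≠ c →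
        ∃! p : Pt, p ∈ S' ∩ interior (convexHull ℝ ({a, b, c} : Set Pt)) := by
      intro a ha b hb c hc hab hac hbc
      obtain ⟨p₀, hp₀, hp₀u⟩ := hone a (hR'sub ha) b (hR'sub hb) c (hR'sub hc) hab hac hbc
      have habc : ({a, b, c} : Set Pt) ⊆ R' := by
        intro z hz
        rcases hz with rfl | rfl | rfl
        exacts [ha, hb, hc]
      have hqnot : q ∉ interior (convexHull ℝ ({a, b, c} : Set Pt)) := by
        intro hqmem
        have hqhull : q ∈ convexHull ℝ R' := convexHull_mono habc (interior_subset hqmem)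
        have := hg q hqhull
        linarith
      refine ⟨p₀, ⟨⟨hp₀.1, ?_⟩, hp₀.2⟩, ?_⟩
      · simp only [mem_singleton_iff]
        intro h
        exact hqnot (h ▸ hp₀.2)
      · intro y hy
        exact hp₀u y ⟨hy.1.1, hy.2⟩
    -- S' is inside the hull of R'
    have hS'int : S' ⊆ interior (convexHull ℝ R') := by
      intro p hp
      have hpS : p ∈ S := hp.1
      have hpq : p ≠ q := by simpa using hp.2
      have hpint : p ∈ interior (convexHull ℝ R) := hSsub hpS
      have hpnotR : p ∉ R := hdisj p hpS
      have hup : u ≠ p := fun h => hpnotR (h ▸ hR'sub huR')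
      have hwp : w ≠ p := fun h => hpnotR (h ▸ hR'sub hwR')
      have hvp : v ≠ p := fun h => hpnotR (h ▸ hvR)
      have hporient : orient u w p ≠ 0 :=
        hgp u (hRRS (hR'sub huR')) w (hRRS (hR'sub hwR')) p (hSRS hpS) huw hup hwp
      rcases hporient.lt_or_gt with hneg | hpos
      · have hU : IsOpen {x : Pt | orient u w x < 0} :=
          isOpen_lt (orient_continuous u w) continuous_const
        have hUsub : interior (convexHull ℝ R) ∩ {x : Pt | orient u w x < 0}
            ⊆ convexHull ℝ R' := by
          intro x hx
          have hxhull : x ∈ convexHull ℝ R := interior_subset hx.1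
          rw [← hins, convexHull_insert hR'ne, mem_convexJoin] at hxhull
          obtain ⟨v', hv', y, hy, hseg⟩ := hxhull
          rw [mem_singleton_iff] at hv'
          subst hv'
          exact claimB hd hvu hvw hg huR' hwR' hy hseg (le_of_lt hx.2)
        exact interior_maximal hUsub (isOpen_interior.inter hU) ⟨hpint, hneg⟩
      · exfalso
        have hpR : p ∈ convexHull ℝ R := interior_subset hpint
        have hpmem : p ∈ convexHull ℝ ({v, u, w} : Set Pt) := by
          rw [← hins, convexHull_insert hR'ne, mem_convexJoin] at hpR
          obtain ⟨v', hv', y, hy, hseg⟩ := hpR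
          rw [mem_singleton_iff] at hv'
          subst hv'
          exact claimA hd hvu hvw hg hy hseg (le_of_lt hpos)
        have hpnint : p ∉ interior (convexHull ℝ ({v, u, w} : Set Pt)) := fun h =>
          hpq (hquniq p ⟨hpS, h⟩)
        have hDvuw : orient v u w ≠ 0 := ne_of_gt hd
        obtain ⟨k1, k2, k3⟩ := (mem_triangle_iff_orient hDvuw).1 hpmem
        have hnint : ¬(0 < orient p u w * orient v u w ∧ 0 < orient v p w * orient v u w ∧
            0 < orient v u p * orient v u w) := fun h =>
          hpnint ((mem_interior_triangle_iff hDvuw).2 h)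
        push_neg at hnint
        rcases k1.lt_or_eq with hk1 | hk1
        · rcases k2.lt_or_eq with hk2 | hk2
          · rcases k3.lt_or_eq with hk3 | hk3
            · exact hnint hk1 hk2 |>.not_gt hk3
            · have h0 : orient v u p = 0 := by
                rcases mul_eq_zero.1 hk3.symm with h' | h'
                exacts [h', absurd h' hDvuw]
              exact hgp v (hRRS hvR) u (hRRS (hR'sub huR')) p (hSRS hpS) hvu' hvp
                hup h0
          · have h0 : orient v p w = 0 := by
              rcases mul_eq_zero.1 hk2.symm with h' | h'
              exacts [h', absurd h' hDvuw]
            exact hgp v (hRRS hvR) p (hSRS hpS) w (hRRS (hR'sub hwR')) hvp hvw'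
              (fun h => hwp h.symm) h0
        · have h0 : orient p u w = 0 := by
            rcases mul_eq_zero.1 hk1.symm with h' | h'
            exacts [h', absurd h' hDvuw]
          exact hgp p (hSRS hpS) u (hRRS (hR'sub huR')) w (hRRS (hR'sub hwR'))
            (fun h => hup h.symm) (fun h => hwp h.symm) huw h0
    -- convex position of R'
    have hconv' : ∀ r ∈ R', r ∈ Set.extremePoints ℝ (convexHull ℝ R') := fun r hr =>
      extremePoints_subset_of_subset (convexHull_mono hR'sub) (hconv r (hR'sub hr))
        (subset_convexHull ℝ R' hr)
    have hgp' : GenPos (R' ∪ S') :=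
      genpos_mono hgp (union_subset_union hR'sub hS'sub)
    have hcount := ih R'.ncard (by omega) R' S' hR'f hS'f hgp' hconv' hR'3 rfl hS'int hone'
    have hScard : S'.ncard + 1 = S.ncard := Set.ncard_diff_singleton_add_one hqS hSf
    omega


section layers
variable {X : Set Pt} {k : ℕ}

lemma peel_subset (S : Set Pt) : peel S ⊆ S := diff_subset

lemma iterate_peel_subset (m : ℕ) (S : Set Pt) : peel^[m] S ⊆ S := by
  induction m with
  | zero => simp
  | succ m ihm =>
    rw [Function.iterate_succ_apply']
    exact (peel_subset _).trans ihm

lemma layerSub_subset (j : ℕ) : layerSub X k j ⊆ X := iterate_peel_subset _ _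

lemma layer_subset_layerSub (j : ℕ) : layer X k j ⊆ layerSub X k j :=
  extremePoints_convexHull_subset

lemma layerSub_step {j : ℕ} (hjk : j < k) :
    layerSub X k j = layerSub X k (j + 1) \ layer X k (j + 1) := by
  have h : k - j = (k - (j + 1)) + 1 := by omega
  rw [layerSub, h, Function.iterate_succ_apply']
  rfl

lemma layerSub_self : layerSub X k k = X := by
  rw [layerSub, Nat.sub_self]
  rfl

end layers


/-- The sizes of the convex layers of a nested almost convex set. -/
theorem nacs_layer_sizes (X : Set Pt) (hX : IsNACS X) (k : ℕ) (hk : HasLayers X k) :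
    (∀ j, 1 ≤ j → j ≤ k → (layer X k j).ncard = 2 ^ j) ∨
    ((layer X k 1).ncard = 1 ∧
      ∀ j, 2 ≤ j → j ≤ k → (layer X k j).ncard = 3 * 2 ^ (j - 2)) := by
  obtain ⟨hXf, hXne, hgp, hnacs⟩ := hX
  have hk1 : 1 ≤ k := by
    by_contra h
    push_neg at h
    interval_cases k
    exact hXne.ne_empty hk.1
  -- basic facts
  have hsubfin : ∀ j, (layerSub X k j).Finite := fun j => hXf.subset (layerSub_subset j)
  have hlayfin : ∀ j, (layer X k j).Finite := fun j =>
    (hsubfin j).subset (layer_subset_layerSub j)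
  have hsubne : ∀ j, 1 ≤ j → j ≤ k → (layerSub X k j).Nonempty := by
    intro j h1 h2
    have := hk.2 (k - j) (by omega)
    exact nonempty_iff_ne_empty.2 this
  have hKM : ∀ j, 1 ≤ j → j ≤ k →
      convexHull ℝ (layer X k j) = convexHull ℝ (layerSub X k j) := fun j h1 h2 =>
    convexHull_extremePoints_of_finite (hsubfin j) (hsubne j h1 h2)
  -- layer 1
  have hlay1 : layer X k 1 = layerSub X k 1 := by
    have h0 : layerSub X k 0 = ∅ := by
      rw [layerSub, Nat.sub_zero]
      exact hk.1
    have hstep := layerSub_step (X := X) (show 0 < k by omega)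
    rw [h0] at hstep
    apply Subset.antisymm (layer_subset_layerSub 1)
    intro p hp
    by_contra hnot
    exact absurd (hstep ▸ (mem_diff p).2 ⟨hp, hnot⟩ : p ∈ (∅ : Set Pt)) (by simp)
  have hlay1card : (layer X k 1).ncard = 1 ∨ (layer X k 1).ncard = 2 := by
    have hne1 : (layer X k 1).Nonempty := hlay1 ▸ hsubne 1 le_rfl hk1
    have hcle : (layer X k 1).ncard ≤ 2 := by
      by_contra hc
      push_neg at hc
      obtain ⟨t, hts, htcard⟩ := Set.exists_subset_card_eq (s := layer X k 1) (n := 3) (by omega)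
      obtain ⟨a, b, c, hab, hac, hbc, rfl⟩ := Set.ncard_eq_three.1 htcard
      obtain ⟨p, hp, -⟩ := hnacs k hk 1 le_rfl hk1 a (hts (by simp)) b (hts (by simp))
        c (hts (by simp)) hab hac hbc
      have h0 : layerSub X k 0 = ∅ := by
        rw [layerSub, Nat.sub_zero]; exact hk.1
      rw [h0] at hp
      exact absurd hp.1 (by simp)
    have hpos : 1 ≤ (layer X k 1).ncard := by
      rw [Nat.one_le_iff_ne_zero]
      intro h
      rw [Set.ncard_eq_zero (hlayfin 1)] at h
      exact hne1.ne_empty h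
    omega
  -- the main recursion
  have hrec : ∀ j, 1 ≤ j → j < k →
      (layerSub X k j).ncard + 2 = (layer X k (j + 1)).ncard := by
    intro j h1 h2
    set R : Set Pt := layer X k (j + 1) with hRdef
    set S : Set Pt := layerSub X k j with hSdef
    have hRfin : R.Finite := hlayfin (j + 1)
    have hSfin : S.Finite := hsubfin j
    have hRX : R ⊆ X := (layer_subset_layerSub (j+1)).trans (layerSub_subset (j+1))
    have hSX : S ⊆ X := layerSub_subset j
    have hgpRS : GenPos (R ∪ S) := genpos_mono hgp (union_subset hRX hSX)
    have hKMj : convexHull ℝ R = convexHull ℝ (layerSub X k (j + 1)) :=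
      hKM (j + 1) (by omega) (by omega)
    have hconv : ∀ r ∈ R, r ∈ Set.extremePoints ℝ (convexHull ℝ R) := by
      intro r hr
      rw [hKMj]
      exact hr
    have hgpsub : GenPos (layerSub X k (j + 1)) :=
      genpos_mono hgp (layerSub_subset (j + 1))
    have hstep := layerSub_step (X := X) h2
    have hSsub : S ⊆ interior (convexHull ℝ R) := by
      intro p hp
      have hp' : p ∈ layerSub X k (j + 1) \ layer X k (j + 1) := hstep ▸ hp
      have := mem_interior_of_not_extreme (hsubfin (j+1)) hgpsub hp'.1 hp'.2
      rw [hKMj]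
      exact this
    have hSRdisj : ∀ p ∈ S, p ∉ R := by
      intro p hp hpR
      have hp' : p ∈ layerSub X k (j + 1) \ layer X k (j + 1) := hstep ▸ hp
      exact hp'.2 hpR
    have hcard3 : 3 ≤ R.ncard := by
      obtain ⟨p, hpS⟩ := hsubne j h1 (by omega)
      have hpint := hSsub hpS
      have hpR : p ∉ R := hSRdisj p hpS
      by_contra hc
      push_neg at hc
      interval_cases hR : R.ncard
      · rw [Set.ncard_eq_zero hRfin] at hR
        rw [hR] at hpint
        simp [convexHull_empty] at hpint
      · rw [Set.ncard_eq_one] at hR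
        obtain ⟨a, hRa⟩ := hR
        rw [hRa] at hpint hpR
        rw [convexHull_singleton] at hpint
        have : interior ({a} : Set Pt) ⊆ {a} := interior_subset
        have hpa := this hpint
        exact hpR (by simpa using hpa)
      · rw [Set.ncard_eq_two] at hR
        obtain ⟨a, b, hab, hRab⟩ := hR
        rw [hRab] at hpint hpR
        rw [convexHull_pair] at hpint
        have hpseg : p ∈ segment ℝ a b := interior_subset hpint
        obtain ⟨s, t, hs, ht, hst, hpeq⟩ := hpseg
        have horient : orient a b p = 0 := by
          rw [← hpeq, orient_combo2 a b a b s t hst, orient_self13, orient_self23]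
          ring
        have haX : a ∈ X := hRX (by rw [hRab]; simp)
        have hbX : b ∈ X := hRX (by rw [hRab]; simp)
        have hpa : a ≠ p := fun h => hpR (h ▸ (by simp : a ∈ ({a,b} : Set Pt)))
        have hpb : b ≠ p := fun h => hpR (h ▸ (by simp : b ∈ ({a,b} : Set Pt)))
        exact hgp a haX b hbX p (hSX hpS) hab hpa hpb horient
    have hone : ∀ a ∈ R, ∀ b ∈ R, ∀ c ∈ R, a ≠ b → a ≠ c → b ≠ c →
        ∃! p : Pt, p ∈ S ∩ interior (convexHull ℝ ({a, b, c} : Set Pt)) := by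
      intro a ha b hb c hc hab hac hbc
      have := hnacs k hk (j + 1) (by omega) (by omega) a ha b hb c hc hab hac hbc
      simpa using this
    exact tri_count R.ncard R S hRfin hSfin hgpRS hconv hcard3 rfl hSsub hone
  -- size of layerSub j
  have hm : ∀ j, 1 ≤ j → j < k →
      (layerSub X k (j + 1)).ncard =
        (layerSub X k j).ncard + (layer X k (j + 1)).ncard := by
    intro j h1 h2
    have hstep := layerSub_step (X := X) h2
    have := Set.ncard_diff_add_ncard_of_subset (layer_subset_layerSub (X := X) (k := k) (j + 1))
      (hsubfin (j + 1))
    rw [← hstep] at this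
    omega
  have hm1 : (layerSub X k 1).ncard = (layer X k 1).ncard := by rw [hlay1]
  set m1 : ℕ := (layer X k 1).ncard with hm1def
  have hmj : ∀ j, 1 ≤ j → j ≤ k → (layerSub X k j).ncard + 2 = (m1 + 2) * 2 ^ (j - 1) := by
    intro j h1 h2
    induction j with
    | zero => omega
    | succ j ihj =>
      rcases Nat.eq_or_lt_of_le h1 with h1' | h1'
      · -- j + 1 = 1
        have : j = 0 := by omega
        subst this
        simp [hm1]
      · have hj1 : 1 ≤ j := by omega
        have hjk : j < k := by omega
        have ih := ihj hj1 (by omega)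
        have e1 := hrec j hj1 hjk
        have e2 := hm j hj1 hjk
        have heq : j + 1 - 1 = (j - 1) + 1 := by omega
        have hB : (m1 + 2) * 2 ^ (j - 1 + 1) = ((m1 + 2) * 2 ^ (j - 1)) * 2 := by
          rw [pow_succ]; ring
        rw [heq, hB]
        omega
  -- layer sizes for j ≥ 2
  have hrj : ∀ j, 2 ≤ j → j ≤ k → (layer X k j).ncard = (m1 + 2) * 2 ^ (j - 2) := by
    intro j h2 hk'
    have hj1 : 1 ≤ j - 1 := by omega
    have hj1k : j - 1 < k := by omega
    have e1 := hrec (j - 1) hj1 hj1k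
    have e2 := hmj (j - 1) hj1 (by omega)
    have hj : j - 1 + 1 = j := by omega
    rw [hj] at e1
    have : j - 1 - 1 = j - 2 := by omega
    rw [this] at e2
    omega
  rcases hlay1card with h1 | h2
  · right
    refine ⟨h1, fun j hj2 hjk => ?_⟩
    rw [hrj j hj2 hjk, h1]
  · left
    intro j hj1 hjk
    rcases Nat.eq_or_lt_of_le hj1 with h | h
    · rw [← h, pow_one]
      exact h2
    · have := hrj j (by omega) hjk
      rw [this, h2]
      have hj : j - 2 + 2 = j := by omega
      calc (2 + 2) * 2 ^ (j - 2) = 2 ^ (j - 2) * 2 ^ 2 := by ring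
      _ = 2 ^ (j - 2 + 2) := (pow_add 2 (j-2) 2).symm
      _ = 2 ^ j := by rw [hj]
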